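/- arXiv:2304.04826 — 4 statements merged into one kernel-verified Lean document; each statement's English description precedes it below -/
import Mathlib

section
/- For CCGs Z = {G_z·ξ + c_z : A_z·ξ = b_z, ξ ∈ C_z} ⊆ ℝⁿ and Y = {G_y·η + c_y : A_y·η = b_y, η ∈ C_y} ⊆ ℝ^m, and matrix R ∈ ℝ^{m×n}, the generalized intersection Z ∩_R Y := {z ∈ Z : R·z ∈ Y} equals the CCG {G_z·ξ + c_z : A_z·ξ = b_z, A_y·η = b_y, R·G_z·ξ − G_y·η = c_y − R·c_z, (ξ,η) ∈ C_z × C_y}. -/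
theorem ccg_generalized_intersection (n ngz ncz m ngy ncy : ℕ)
    (Gz : Matrix (Fin n) (Fin ngz) ℝ) (cz : Fin n → ℝ)
    (Az : Matrix (Fin ncz) (Fin ngz) ℝ) (bz : Fin ncz → ℝ)
    (Cz : Set (Fin ngz → ℝ))
    (Gy : Matrix (Fin m) (Fin ngy) ℝ) (cy : Fin m → ℝ)
    (Ay : Matrix (Fin ncy) (Fin ngy) ℝ) (by_ : Fin ncy → ℝ)
    (Cy : Set (Fin ngy → ℝ))
    (R : Matrix (Fin m) (Fin n) ℝ) :
    {z ∈ {x : Fin n → ℝ | ∃ ξ, Az.mulVec ξ = bz ∧ ξ ∈ Cz ∧ x = Gz.mulVec ξ + cz} |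
        R.mulVec z ∈ {y : Fin m → ℝ | ∃ η, Ay.mulVec η = by_ ∧ η ∈ Cy ∧ y = Gy.mulVec η + cy}}
      = {x : Fin n → ℝ | ∃ ξ η, Az.mulVec ξ = bz ∧ Ay.mulVec η = by_ ∧
          (R * Gz).mulVec ξ - Gy.mulVec η = cy - R.mulVec cz ∧
          ξ ∈ Cz ∧ η ∈ Cy ∧ x = Gz.mulVec ξ + cz} := by
  ext x
  simp only [Set.mem_setOf_eq, Set.mem_sep_iff]
  constructor
  · rintro ⟨⟨ξ, hAz, hCz, rfl⟩, η, hAy, hCy, heq⟩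
    refine ⟨ξ, η, hAz, hAy, ?_, hCz, hCy, rfl⟩
    rw [Matrix.mulVec_add, Matrix.mulVec_mulVec] at heq
    ext i
    have := congrFun heq i
    simp only [Pi.add_apply, Pi.sub_apply] at *
    linarith
  · rintro ⟨ξ, η, hAz, hAy, heq, hCz, hCy, rfl⟩
    refine ⟨⟨ξ, hAz, hCz, rfl⟩, η, hAy, hCy, ?_⟩
    rw [Matrix.mulVec_add, Matrix.mulVec_mulVec]
    ext i
    have := congrFun heq i
    simp only [Pi.add_apply, Pi.sub_apply] at *
    linarith
end

section
/- Let X = {G_x·ξ + c_x : A_x·ξ = b_x, ‖ξ‖_x ≤ 1} and Y = {G_y·η + c_y : A_y·η = b_y, ‖η‖_y ≤ 1} be nonempty CCGs in ℝⁿ whose constraint sets are unit balls of norms ‖·‖_x and ‖·‖_y. Then the convex hull of X ∪ Y equals the set {G_x·ξ + λ·c_x + G_y·η + (1−λ)·c_y : λ ∈ [0,1], A_x·ξ = λ·b_x, A_y·η = (1−λ)·b_y, ‖ξ‖_x ≤ λ, ‖η‖_y ≤ 1−λ}. -/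
open Set

theorem ccg_cvxHull_param (n ngx ncx ngy ncy : ℕ)
    (Nx : (Fin ngx → ℝ) → ℝ) (Ny : (Fin ngy → ℝ) → ℝ)
    (hNx₁ : ∀ x y, Nx (x + y) ≤ Nx x + Nx y)
    (hNx₂ : ∀ (a : ℝ) x, Nx (a • x) = |a| * Nx x)
    (hNx₃ : ∀ x, Nx x = 0 → x = 0)
    (hNy₁ : ∀ x y, Ny (x + y) ≤ Ny x + Ny y)
    (hNy₂ : ∀ (a : ℝ) x, Ny (a • x) = |a| * Ny x)
    (hNy₃ : ∀ x, Ny x = 0 → x = 0)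
    (Gx : Matrix (Fin n) (Fin ngx) ℝ) (cx : Fin n → ℝ)
    (Ax : Matrix (Fin ncx) (Fin ngx) ℝ) (bx : Fin ncx → ℝ)
    (Gy : Matrix (Fin n) (Fin ngy) ℝ) (cy : Fin n → ℝ)
    (Ay : Matrix (Fin ncy) (Fin ngy) ℝ) (by_ : Fin ncy → ℝ)
    (X Y : Set (Fin n → ℝ))
    (hX : X = {x | ∃ ξ, Ax.mulVec ξ = bx ∧ Nx ξ ≤ 1 ∧ x = Gx.mulVec ξ + cx})
    (hY : Y = {y | ∃ η, Ay.mulVec η = by_ ∧ Ny η ≤ 1 ∧ y = Gy.mulVec η + cy})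
    (hXne : X.Nonempty) (hYne : Y.Nonempty) :
    convexHull ℝ (X ∪ Y) =
      {z | ∃ lam ∈ Icc (0:ℝ) 1, ∃ ξ η,
        Ax.mulVec ξ = lam • bx ∧ Ay.mulVec η = (1 - lam) • by_ ∧
        Nx ξ ≤ lam ∧ Ny η ≤ 1 - lam ∧
        z = Gx.mulVec ξ + lam • cx + Gy.mulVec η + (1 - lam) • cy} := by
  have hNx0 : Nx 0 = 0 := by simpa using hNx₂ 0 0
  have hNy0 : Ny 0 = 0 := by simpa using hNy₂ 0 0
  have hNxpos : ∀ ξ, 0 ≤ Nx ξ := by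
    intro ξ
    have h := hNx₁ ξ (-ξ)
    have h2 : Nx (-ξ) = Nx ξ := by simpa using hNx₂ (-1) ξ
    simp only [add_neg_cancel, hNx0, h2] at h
    linarith
  have hNypos : ∀ η, 0 ≤ Ny η := by
    intro η
    have h := hNy₁ η (-η)
    have h2 : Ny (-η) = Ny η := by simpa using hNy₂ (-1) η
    simp only [add_neg_cancel, hNy0, h2] at h
    linarith
  apply Subset.antisymm
  · -- convexHull ⊆ S
    apply convexHull_min
    · rintro z (hz | hz)
      · rw [hX] at hz
        obtain ⟨ξ, h1, h2, h3⟩ := hz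
        exact ⟨1, ⟨zero_le_one, le_refl 1⟩, ξ, 0, by simp [h1],
          by simp [Matrix.mulVec_zero], h2, by simp [hNy0], by simp [h3, Matrix.mulVec_zero]⟩
      · rw [hY] at hz
        obtain ⟨η, h1, h2, h3⟩ := hz
        exact ⟨0, ⟨le_refl 0, zero_le_one⟩, 0, η, by simp [Matrix.mulVec_zero],
          by simp [h1], by simp [hNx0], by simpa using h2, by simp [h3, Matrix.mulVec_zero]⟩
    · rintro z₁ ⟨l₁, ⟨hl₁0, hl₁1⟩, ξ₁, η₁, ha₁, hb₁, hn₁, hm₁, hz₁⟩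
        z₂ ⟨l₂, ⟨hl₂0, hl₂1⟩, ξ₂, η₂, ha₂, hb₂, hn₂, hm₂, hz₂⟩ a b ha hb hab
      have hb' : b = 1 - a := by linarith
      subst hb'
      refine ⟨a * l₁ + (1 - a) * l₂, ⟨by positivity, by nlinarith⟩,
        a • ξ₁ + (1 - a) • ξ₂, a • η₁ + (1 - a) • η₂, ?_, ?_, ?_, ?_, ?_⟩
      · rw [Matrix.mulVec_add, Matrix.mulVec_smul, Matrix.mulVec_smul, ha₁, ha₂,
          smul_smul, smul_smul, ← add_smul]
      · rw [Matrix.mulVec_add, Matrix.mulVec_smul, Matrix.mulVec_smul, hb₁, hb₂,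
          smul_smul, smul_smul, ← add_smul]
        congr 1
        ring
      · calc Nx (a • ξ₁ + (1 - a) • ξ₂) ≤ Nx (a • ξ₁) + Nx ((1 - a) • ξ₂) := hNx₁ _ _
          _ = a * Nx ξ₁ + (1 - a) * Nx ξ₂ := by
              rw [hNx₂, hNx₂, abs_of_nonneg ha, abs_of_nonneg hb]
          _ ≤ a * l₁ + (1 - a) * l₂ := by nlinarith
      · calc Ny (a • η₁ + (1 - a) • η₂) ≤ Ny (a • η₁) + Ny ((1 - a) • η₂) := hNy₁ _ _
          _ = a * Ny η₁ + (1 - a) * Ny η₂ := by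
              rw [hNy₂, hNy₂, abs_of_nonneg ha, abs_of_nonneg hb]
          _ ≤ a * (1 - l₁) + (1 - a) * (1 - l₂) := by nlinarith
          _ ≤ 1 - (a * l₁ + (1 - a) * l₂) := by nlinarith
      · rw [hz₁, hz₂, Matrix.mulVec_add, Matrix.mulVec_smul, Matrix.mulVec_smul,
          Matrix.mulVec_add, Matrix.mulVec_smul, Matrix.mulVec_smul]
        module
  · -- S ⊆ convexHull
    rintro z ⟨lam, ⟨hl0, hl1⟩, ξ, η, h1, h2, h3, h4, hz⟩
    rcases eq_or_lt_of_le hl0 with hlam0 | hlam0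
    · -- lam = 0, z ∈ Y
      have hξ : ξ = 0 := hNx₃ ξ (le_antisymm (by linarith) (hNxpos ξ))
      apply subset_convexHull ℝ (X ∪ Y)
      right
      rw [hY]
      refine ⟨η, by simpa [← hlam0] using h2, by linarith, ?_⟩
      rw [hz, hξ, ← hlam0]
      simp [Matrix.mulVec_zero]
    rcases eq_or_lt_of_le hl1 with hlam1 | hlam1
    · -- lam = 1, z ∈ X
      have hη : η = 0 := hNy₃ η (le_antisymm (by linarith) (hNypos η))
      apply subset_convexHull ℝ (X ∪ Y)
      left
      rw [hX]
      refine ⟨ξ, by simpa [hlam1] using h1, by linarith, ?_⟩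
      rw [hz, hη, hlam1]
      simp [Matrix.mulVec_zero]
    · -- 0 < lam < 1
      have hlne : lam ≠ 0 := ne_of_gt hlam0
      have hlne' : (1 - lam) ≠ 0 := ne_of_gt (by linarith)
      have hx₀ : Gx.mulVec (lam⁻¹ • ξ) + cx ∈ X := by
        rw [hX]
        refine ⟨lam⁻¹ • ξ, ?_, ?_, rfl⟩
        · rw [Matrix.mulVec_smul, h1, smul_smul, inv_mul_cancel₀ hlne, one_smul]
        · rw [hNx₂, abs_of_pos (by positivity)]
          rw [inv_mul_le_one₀ hlam0]
          simpa using h3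
      have hy₀ : Gy.mulVec ((1 - lam)⁻¹ • η) + cy ∈ Y := by
        rw [hY]
        refine ⟨(1 - lam)⁻¹ • η, ?_, ?_, rfl⟩
        · rw [Matrix.mulVec_smul, h2, smul_smul, inv_mul_cancel₀ hlne', one_smul]
        · rw [hNy₂, abs_of_pos (inv_pos.mpr (by linarith))]
          rw [inv_mul_le_one₀ (by linarith)]
          simpa using h4
      have hzeq : z = lam • (Gx.mulVec (lam⁻¹ • ξ) + cx)
          + (1 - lam) • (Gy.mulVec ((1 - lam)⁻¹ • η) + cy) := by
        rw [hz, Matrix.mulVec_smul, Matrix.mulVec_smul, smul_add, smul_add,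
          smul_smul, smul_smul, mul_inv_cancel₀ hlne, mul_inv_cancel₀ hlne',
          one_smul, one_smul]
        abel
      rw [hzeq]
      exact (convex_convexHull ℝ (X ∪ Y))
        (subset_convexHull ℝ _ (Or.inl hx₀)) (subset_convexHull ℝ _ (Or.inr hy₀))
        hl0 (by linarith) (by ring)
end

section
/- Let X = {G_x·ξ + c_x : A_x·ξ = b_x, ‖ξ‖_x ≤ 1} and Y = {G_y·η + c_y : A_y·η = b_y, ‖η‖_y ≤ 1} be nonempty CCGs in ℝⁿ. After the substitution ξ_λ = λ − 1/2, the convex hull of X ∪ Y equals the set Z_h = {G_x·ξ + G_y·η + (c_x − c_y)·ξ_λ + (c_x + c_y)/2 : A_x·ξ − b_x·ξ_λ = b_x/2, A_y·η + b_y·ξ_λ = b_y/2, ‖ξ‖_x ≤ 1/2 + ξ_λ, ‖η‖_y ≤ 1/2 − ξ_λ, ξ_λ ∈ ℝ}. -/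
open Set

theorem ccg_cvxHull_Zh (n ngx ncx ngy ncy : ℕ)
    (Nx : (Fin ngx → ℝ) → ℝ) (Ny : (Fin ngy → ℝ) → ℝ)
    (hNx₁ : ∀ x y, Nx (x + y) ≤ Nx x + Nx y)
    (hNx₂ : ∀ (a : ℝ) x, Nx (a • x) = |a| * Nx x)
    (hNx₃ : ∀ x, Nx x = 0 → x = 0)
    (hNy₁ : ∀ x y, Ny (x + y) ≤ Ny x + Ny y)
    (hNy₂ : ∀ (a : ℝ) x, Ny (a • x) = |a| * Ny x)
    (hNy₃ : ∀ x, Ny x = 0 → x = 0)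
    (Gx : Matrix (Fin n) (Fin ngx) ℝ) (cx : Fin n → ℝ)
    (Ax : Matrix (Fin ncx) (Fin ngx) ℝ) (bx : Fin ncx → ℝ)
    (Gy : Matrix (Fin n) (Fin ngy) ℝ) (cy : Fin n → ℝ)
    (Ay : Matrix (Fin ncy) (Fin ngy) ℝ) (by_ : Fin ncy → ℝ)
    (X Y : Set (Fin n → ℝ))
    (hX : X = {x | ∃ ξ, Ax.mulVec ξ = bx ∧ Nx ξ ≤ 1 ∧ x = Gx.mulVec ξ + cx})
    (hY : Y = {y | ∃ η, Ay.mulVec η = by_ ∧ Ny η ≤ 1 ∧ y = Gy.mulVec η + cy})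
    (hXne : X.Nonempty) (hYne : Y.Nonempty) :
    convexHull ℝ (X ∪ Y) =
      {z | ∃ (ξ : Fin ngx → ℝ) (η : Fin ngy → ℝ) (ξlam : ℝ),
        Ax.mulVec ξ - ξlam • bx = (1/2 : ℝ) • bx ∧
        Ay.mulVec η + ξlam • by_ = (1/2 : ℝ) • by_ ∧
        Nx ξ ≤ 1/2 + ξlam ∧ Ny η ≤ 1/2 - ξlam ∧
        z = Gx.mulVec ξ + Gy.mulVec η + ξlam • (cx - cy) + (1/2 : ℝ) • (cx + cy)} := by
  -- basic norm facts
  have hNx0 : Nx 0 = 0 := by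
    have := hNx₂ 0 0
    simpa using this
  have hNy0 : Ny 0 = 0 := by
    have := hNy₂ 0 0
    simpa using this
  have hNxnn : ∀ v, 0 ≤ Nx v := by
    intro v
    have h1 := hNx₁ v (-v)
    have h2 : Nx (-v) = Nx v := by simpa using hNx₂ (-1) v
    rw [add_neg_cancel, hNx0, h2] at h1
    linarith
  have hNynn : ∀ v, 0 ≤ Ny v := by
    intro v
    have h1 := hNy₁ v (-v)
    have h2 : Ny (-v) = Ny v := by simpa using hNy₂ (-1) v
    rw [add_neg_cancel, hNy0, h2] at h1
    linarith
  -- reformulation of the linear constraints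
  have keyx : ∀ (ξ : Fin ngx → ℝ) (l : ℝ),
      (Ax.mulVec ξ - l • bx = (1/2 : ℝ) • bx) ↔ Ax.mulVec ξ = (1/2 + l) • bx := by
    intro ξ l
    rw [sub_eq_iff_eq_add, add_smul, add_comm ((1/2 : ℝ) • bx)]
  have keyy : ∀ (η : Fin ngy → ℝ) (l : ℝ),
      (Ay.mulVec η + l • by_ = (1/2 : ℝ) • by_) ↔ Ay.mulVec η = (1/2 - l) • by_ := by
    intro η l
    rw [sub_smul, eq_sub_iff_add_eq]
  apply le_antisymm
  · -- hull ⊆ Z : Z contains X ∪ Y and is convex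
    apply convexHull_min
    · rintro z (hz | hz)
      · rw [hX] at hz
        obtain ⟨ξ, h1, h2, rfl⟩ := hz
        refine ⟨ξ, 0, 1/2, ?_, ?_, by linarith, by simp [hNy0], ?_⟩
        · rw [keyx, h1]; norm_num
        · rw [keyy]; simp [Matrix.mulVec_zero]
        · rw [Matrix.mulVec_zero]
          match_scalars <;> ring
      · rw [hY] at hz
        obtain ⟨η, h1, h2, rfl⟩ := hz
        refine ⟨0, η, -(1/2), ?_, ?_, by simp [hNx0], by linarith, ?_⟩
        · rw [keyx]; simp [Matrix.mulVec_zero]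
        · rw [keyy, h1]; norm_num
        · rw [Matrix.mulVec_zero]
          match_scalars <;> ring
    · rintro z1 ⟨ξ1, η1, l1, hc1, hd1, hn1, hm1, rfl⟩ z2 ⟨ξ2, η2, l2, hc2, hd2, hn2, hm2, rfl⟩
        a b ha hb hab
      rw [keyx] at hc1 hc2
      rw [keyy] at hd1 hd2
      refine ⟨a • ξ1 + b • ξ2, a • η1 + b • η2, a * l1 + b * l2, ?_, ?_, ?_, ?_, ?_⟩
      · rw [keyx, Matrix.mulVec_add, Matrix.mulVec_smul, Matrix.mulVec_smul, hc1, hc2,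
          smul_smul, smul_smul, ← add_smul]
        congr 1
        nlinarith [hab]
      · rw [keyy, Matrix.mulVec_add, Matrix.mulVec_smul, Matrix.mulVec_smul, hd1, hd2,
          smul_smul, smul_smul, ← add_smul]
        congr 1
        nlinarith [hab]
      · have h := hNx₁ (a • ξ1) (b • ξ2)
        rw [hNx₂, hNx₂, abs_of_nonneg ha, abs_of_nonneg hb] at h
        nlinarith [mul_le_mul_of_nonneg_left hn1 ha, mul_le_mul_of_nonneg_left hn2 hb]
      · have h := hNy₁ (a • η1) (b • η2)
        rw [hNy₂, hNy₂, abs_of_nonneg ha, abs_of_nonneg hb] at h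
        nlinarith [mul_le_mul_of_nonneg_left hm1 ha, mul_le_mul_of_nonneg_left hm2 hb]
      · rw [Matrix.mulVec_add, Matrix.mulVec_smul, Matrix.mulVec_smul,
          Matrix.mulVec_add, Matrix.mulVec_smul, Matrix.mulVec_smul]
        match_scalars <;> (ring_nf; try linarith)
  · -- Z ⊆ hull
    rintro z ⟨ξ, η, l, hc, hd, hn, hm, rfl⟩
    rw [keyx] at hc
    rw [keyy] at hd
    have hl1 : -(1/2) ≤ l := by have := hNxnn ξ; linarith
    have hl2 : l ≤ 1/2 := by have := hNynn η; linarith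
    rcases eq_or_lt_of_le hl1 with hE | hgt
    · -- l = -1/2 : point lies in Y
      have hξ : ξ = 0 := hNx₃ ξ (le_antisymm (by linarith [hn, hE]) (hNxnn ξ))
      apply subset_convexHull ℝ (X ∪ Y)
      right
      rw [hY]
      refine ⟨η, ?_, by linarith, ?_⟩
      · rw [hd, ← hE]; norm_num
      · rw [hξ, Matrix.mulVec_zero, ← hE]
        match_scalars <;> ring
    · rcases eq_or_lt_of_le hl2 with hE | hlt
      · -- l = 1/2 : point lies in X
        have hη : η = 0 := hNy₃ η (le_antisymm (by linarith [hm, hE]) (hNynn η))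
        apply subset_convexHull ℝ (X ∪ Y)
        left
        rw [hX]
        refine ⟨ξ, ?_, by linarith, ?_⟩
        · rw [hc, hE]; norm_num
        · rw [hη, Matrix.mulVec_zero, hE]
          match_scalars <;> ring
      · -- interior case : genuine convex combination
        set lam : ℝ := 1/2 + l with hlam
        clear_value lam
        have hlam0 : 0 < lam := by simp only [hlam]; linarith
        have hlam1 : lam < 1 := by simp only [hlam]; linarith
        have hx : Gx.mulVec (lam⁻¹ • ξ) + cx ∈ X := by
          rw [hX]
          refine ⟨lam⁻¹ • ξ, ?_, ?_, rfl⟩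
          · rw [Matrix.mulVec_smul, hc, smul_smul, inv_mul_cancel₀ hlam0.ne', one_smul]
          · rw [hNx₂, abs_of_nonneg (inv_nonneg.mpr hlam0.le)]
            rw [inv_mul_le_iff₀ hlam0, mul_one]
            exact hn
        have hy : Gy.mulVec ((1 - lam)⁻¹ • η) + cy ∈ Y := by
          rw [hY]
          have h1l : (0:ℝ) < 1 - lam := by linarith
          refine ⟨(1 - lam)⁻¹ • η, ?_, ?_, rfl⟩
          · rw [Matrix.mulVec_smul, hd, smul_smul]
            have : (1 : ℝ) - lam = 1/2 - l := by simp only [hlam]; ring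
            rw [this] at *
            rw [inv_mul_cancel₀ (by linarith : (1/2 : ℝ) - l ≠ 0), one_smul]
          · rw [hNy₂, abs_of_nonneg (inv_nonneg.mpr h1l.le)]
            rw [inv_mul_le_iff₀ h1l, mul_one]
            have : (1 : ℝ) - lam = 1/2 - l := by simp only [hlam]; ring
            rw [this]
            exact hm
        have hmem := (convex_convexHull ℝ (X ∪ Y))
          (subset_convexHull ℝ (X ∪ Y) (Or.inl hx))
          (subset_convexHull ℝ (X ∪ Y) (Or.inr hy))
          hlam0.le (by linarith : (0:ℝ) ≤ 1 - lam) (by ring)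
        rw [Matrix.mulVec_smul, Matrix.mulVec_smul, smul_add, smul_add, smul_smul,
          smul_smul, mul_inv_cancel₀ hlam0.ne',
          mul_inv_cancel₀ (sub_ne_zero.mpr hlam1.ne'), one_smul, one_smul] at hmem
        convert hmem using 1
        rw [hlam]
        match_scalars <;> ring
end

section
/- If x ∈ cvxHull(X ∪ Y) for nonempty convex sets X, Y ⊆ ℝⁿ, then x belongs to Z_h of the closed-form formula: there exist λ ∈ [0,1], ξ with A_x·ξ = λ·b_x, ‖ξ‖_x ≤ λ, and η with A_y·η = (1−λ)·b_y, ‖η‖_y ≤ 1−λ, such that x = G_x·ξ + λ·c_x + G_y·η + (1−λ)·c_y, where X = {G_x·ξ + c_x : A_x·ξ = b_x, ‖ξ‖_x ≤ 1} and Y = {G_y·η + c_y : A_y·η = b_y, ‖η‖_y ≤ 1}. -/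
open Set

theorem mem_cvxHull_imp_Zh (n ngx ncx ngy ncy : ℕ)
    (Nx : (Fin ngx → ℝ) → ℝ) (Ny : (Fin ngy → ℝ) → ℝ)
    (hNx₁ : ∀ x y, Nx (x + y) ≤ Nx x + Nx y)
    (hNx₂ : ∀ (a : ℝ) x, Nx (a • x) = |a| * Nx x)
    (hNx₃ : ∀ x, Nx x = 0 → x = 0)
    (hNy₁ : ∀ x y, Ny (x + y) ≤ Ny x + Ny y)
    (hNy₂ : ∀ (a : ℝ) x, Ny (a • x) = |a| * Ny x)
    (hNy₃ : ∀ x, Ny x = 0 → x = 0)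
    (Gx : Matrix (Fin n) (Fin ngx) ℝ) (cx : Fin n → ℝ)
    (Ax : Matrix (Fin ncx) (Fin ngx) ℝ) (bx : Fin ncx → ℝ)
    (Gy : Matrix (Fin n) (Fin ngy) ℝ) (cy : Fin n → ℝ)
    (Ay : Matrix (Fin ncy) (Fin ngy) ℝ) (by_ : Fin ncy → ℝ)
    (X Y : Set (Fin n → ℝ))
    (hX : X = {x | ∃ ξ, Ax.mulVec ξ = bx ∧ Nx ξ ≤ 1 ∧ x = Gx.mulVec ξ + cx})
    (hY : Y = {y | ∃ η, Ay.mulVec η = by_ ∧ Ny η ≤ 1 ∧ y = Gy.mulVec η + cy})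
    (hXne : X.Nonempty) (hYne : Y.Nonempty)
    (x : Fin n → ℝ) (hx : x ∈ convexHull ℝ (X ∪ Y)) :
    ∃ lam ∈ Icc (0:ℝ) 1, ∃ ξ η,
      Ax.mulVec ξ = lam • bx ∧ Nx ξ ≤ lam ∧
      Ay.mulVec η = (1 - lam) • by_ ∧ Ny η ≤ 1 - lam ∧
      x = Gx.mulVec ξ + lam • cx + Gy.mulVec η + (1 - lam) • cy := by
  set Z : Set (Fin n → ℝ) := {x | ∃ lam ∈ Icc (0:ℝ) 1, ∃ ξ η,
      Ax.mulVec ξ = lam • bx ∧ Nx ξ ≤ lam ∧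
      Ay.mulVec η = (1 - lam) • by_ ∧ Ny η ≤ 1 - lam ∧
      x = Gx.mulVec ξ + lam • cx + Gy.mulVec η + (1 - lam) • cy} with hZ
  have hNx0 : Nx 0 = 0 := by
    have := hNx₂ 0 0; simpa using this
  have hNy0 : Ny 0 = 0 := by
    have := hNy₂ 0 0; simpa using this
  suffices h : convexHull ℝ (X ∪ Y) ⊆ Z from h hx
  apply convexHull_min
  · rintro z (hz | hz)
    · rw [hX] at hz
      obtain ⟨ξ, h1, h2, h3⟩ := hz
      refine ⟨1, ⟨zero_le_one, le_refl 1⟩, ξ, 0, by simpa using h1, by simpa using h2,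
        ?_, ?_, ?_⟩
      · simp [Matrix.mulVec_zero]
      · simp [hNy0]
      · simp [h3, Matrix.mulVec_zero]
    · rw [hY] at hz
      obtain ⟨η, h1, h2, h3⟩ := hz
      refine ⟨0, ⟨le_refl 0, zero_le_one⟩, 0, η, ?_, by simp [hNx0], by simpa using h1,
        by simpa using h2, ?_⟩
      · simp [Matrix.mulVec_zero]
      · simp [h3, Matrix.mulVec_zero]
  · rintro z1 ⟨l1, ⟨hl10, hl11⟩, ξ1, η1, he1, hn1, he1', hn1', hz1⟩
    rintro z2 ⟨l2, ⟨hl20, hl21⟩, ξ2, η2, he2, hn2, he2', hn2', hz2⟩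
    rintro a b ha hb hab
    refine ⟨a * l1 + b * l2, ⟨by positivity, by nlinarith⟩,
      a • ξ1 + b • ξ2, a • η1 + b • η2, ?_, ?_, ?_, ?_, ?_⟩
    · rw [Matrix.mulVec_add, Matrix.mulVec_smul, Matrix.mulVec_smul, he1, he2,
        smul_smul, smul_smul, add_smul]
    · calc Nx (a • ξ1 + b • ξ2) ≤ Nx (a • ξ1) + Nx (b • ξ2) := hNx₁ _ _
        _ = |a| * Nx ξ1 + |b| * Nx ξ2 := by rw [hNx₂, hNx₂]
        _ = a * Nx ξ1 + b * Nx ξ2 := by rw [abs_of_nonneg ha, abs_of_nonneg hb]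
        _ ≤ a * l1 + b * l2 := by
            have h1 := mul_le_mul_of_nonneg_left hn1 ha
            have h2 := mul_le_mul_of_nonneg_left hn2 hb
            linarith
    · rw [Matrix.mulVec_add, Matrix.mulVec_smul, Matrix.mulVec_smul, he1', he2',
        smul_smul, smul_smul]
      have : (1 : ℝ) - (a * l1 + b * l2) = a * (1 - l1) + b * (1 - l2) := by nlinarith
      rw [this, add_smul]
    · calc Ny (a • η1 + b • η2) ≤ Ny (a • η1) + Ny (b • η2) := hNy₁ _ _
        _ = |a| * Ny η1 + |b| * Ny η2 := by rw [hNy₂, hNy₂]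
        _ = a * Ny η1 + b * Ny η2 := by rw [abs_of_nonneg ha, abs_of_nonneg hb]
        _ ≤ 1 - (a * l1 + b * l2) := by
            have h1 := mul_le_mul_of_nonneg_left hn1' ha
            have h2 := mul_le_mul_of_nonneg_left hn2' hb
            nlinarith
    · rw [hz1, hz2, Matrix.mulVec_add, Matrix.mulVec_add, Matrix.mulVec_smul,
        Matrix.mulVec_smul, Matrix.mulVec_smul, Matrix.mulVec_smul]
      have h1 : (1 : ℝ) - (a * l1 + b * l2) = a * (1 - l1) + b * (1 - l2) := by nlinarith
      rw [h1]
      module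
end
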